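/- Let v ∈ ℝ^p be an s-sparse vector (s ≥ 1) and let K(v) = cone{y − v : y ∈ ℝ^p, ‖y‖₁ ≤ ‖v‖₁}. Then the squared Gaussian width of K(v) ∩ B₂^p satisfies ℓ(K(v) ∩ B₂^p)² ≤ 2s·ln(ep/s). -/

import Mathlib

open MeasureTheory ProbabilityTheory

noncomputable section

def l1 {n : ℕ} (v : Fin n → ℝ) : ℝ := ∑ i, |v i|

def l2 {n : ℕ} (v : Fin n → ℝ) : ℝ := Real.sqrt (∑ i, (v i) ^ 2)

def dot {n : ℕ} (u v : Fin n → ℝ) : ℝ := ∑ i, u i * v i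

def stdGaussian (n : ℕ) : Measure (Fin n → ℝ) :=
  Measure.pi (fun _ => gaussianReal 0 1)

/-- Gaussian width of a subset of `ℝ^p`. -/
def gaussWidth {p : ℕ} (T : Set (Fin p → ℝ)) : ℝ :=
  ∫ g, (⨆ x ∈ T, dot x g) ∂(stdGaussian p)

def coneHull {d : ℕ} (S : Set (Fin d → ℝ)) : Set (Fin d → ℝ) :=
  {w | ∃ (k : ℕ) (t : Fin k → ℝ) (z : Fin k → (Fin d → ℝ)),
    (∀ i, 0 ≤ t i) ∧ (∀ i, z i ∈ S) ∧ w = ∑ i, t i • z i}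


open Real
open scoped ENNReal NNReal

lemma gaussianPDF_eq_coe : (gaussianPDF 0 1) =
    fun x => (((gaussianPDFReal 0 1 x).toNNReal : ℝ≥0) : ℝ≥0∞) := by
  ext x; simp [gaussianPDF, ENNReal.ofReal]

lemma integral_gaussianReal_eq (f : ℝ → ℝ) :
    ∫ x, f x ∂(gaussianReal 0 1) = ∫ x, gaussianPDFReal 0 1 x * f x := by
  rw [gaussianReal_of_var_ne_zero _ one_ne_zero, gaussianPDF_eq_coe,
    integral_withDensity_eq_integral_smul
      ((measurable_gaussianPDFReal 0 1).real_toNNReal) f]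
  congr 1; ext x
  simp [NNReal.smul_def, Real.coe_toNNReal _ (gaussianPDFReal_nonneg 0 1 x)]

lemma integrable_gaussianReal_iff {f : ℝ → ℝ} :
    Integrable f (gaussianReal 0 1) ↔ Integrable (fun x => gaussianPDFReal 0 1 x * f x) := by
  rw [gaussianReal_of_var_ne_zero _ one_ne_zero, gaussianPDF_eq_coe,
    integrable_withDensity_iff_integrable_smul
      ((measurable_gaussianPDFReal 0 1).real_toNNReal)]
  constructor <;> intro h <;> refine h.congr (Filter.Eventually.of_forall fun x => ?_) <;>
    simp [NNReal.smul_def, Real.coe_toNNReal _ (gaussianPDFReal_nonneg 0 1 x)]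

lemma gaussianPDFReal_zero_one (x : ℝ) :
    gaussianPDFReal 0 1 x = (Real.sqrt (2 * π))⁻¹ * rexp (-(x ^ 2 / 2)) := by
  rw [gaussianPDFReal]
  norm_num [neg_div]

lemma integrable_exp_half : Integrable (fun x : ℝ => rexp (-(x ^ 2 / 2))) := by
  have := integrable_exp_neg_mul_sq (b := (1/2 : ℝ)) (by norm_num)
  refine this.congr (Filter.Eventually.of_forall fun x => ?_)
  ring_nf

lemma integral_exp_half : ∫ x : ℝ, rexp (-(x ^ 2 / 2)) = Real.sqrt (2 * π) := by
  have := integral_gaussian (1/2 : ℝ)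
  rw [show π / (1/2 : ℝ) = 2 * π by ring] at this
  rw [← this]
  congr 1; ext x; ring_nf

lemma integrable_sq_exp_half : Integrable (fun x : ℝ => x ^ 2 * rexp (-(x ^ 2 / 2))) := by
  have := integrable_rpow_mul_exp_neg_mul_sq (b := (1/2 : ℝ)) (by norm_num) (s := 2) (by norm_num)
  refine this.congr (Filter.Eventually.of_forall fun x => ?_)
  have h2 : (x : ℝ) ^ (2:ℝ) = x ^ 2 := by
    rw [show (2:ℝ) = ((2:ℕ):ℝ) by norm_num, Real.rpow_natCast]
  simp only [h2]
  ring_nf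

lemma integrable_mul_exp_half : Integrable (fun x : ℝ => x * rexp (-(x ^ 2 / 2))) := by
  have := integrable_mul_exp_neg_mul_sq (b := (1/2 : ℝ)) (by norm_num)
  refine this.congr (Filter.Eventually.of_forall fun x => ?_)
  ring_nf

lemma integral_mul_exp_half : ∫ x : ℝ, x * rexp (-(x ^ 2 / 2)) = 0 := by
  have h := MeasureTheory.integral_neg_eq_self (fun x : ℝ => x * rexp (-(x ^ 2 / 2))) volume
  simp only [neg_sq, neg_mul] at h
  rw [integral_neg] at h
  linarith

lemma integral_Ioi_sq_exp_half :
    ∫ x in Set.Ioi (0:ℝ), x ^ 2 * rexp (-(x ^ 2 / 2)) = Real.sqrt (2 * π) / 2 := by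
  have hderiv : ∀ x ∈ Set.Ici (0:ℝ), HasDerivAt (fun x : ℝ => -x * rexp (-(x ^ 2 / 2)))
      (x ^ 2 * rexp (-(x ^ 2 / 2)) - rexp (-(x ^ 2 / 2))) x := by
    intro x _
    have h1 : HasDerivAt (fun x : ℝ => -(x ^ 2 / 2)) (-x) x := by
      simpa using ((hasDerivAt_pow 2 x).div_const 2).fun_neg
    have h2 := ((hasDerivAt_id x).fun_neg.fun_mul h1.exp)
    refine h2.congr_deriv ?_
    simp only [id_eq, neg_mul, one_mul, mul_neg, neg_neg]
    ring
  have htend : Filter.Tendsto (fun x : ℝ => -x * rexp (-(x ^ 2 / 2)))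
      Filter.atTop (nhds 0) := by
    rw [tendsto_zero_iff_norm_tendsto_zero]
    apply squeeze_zero' (Filter.Eventually.of_forall fun x => norm_nonneg _)
      (g := fun x : ℝ => x ^ 1 * rexp (-x))
    · filter_upwards [Filter.eventually_ge_atTop (2:ℝ)] with x hx
      have hx0 : (0:ℝ) ≤ x := by linarith
      have : rexp (-(x ^ 2 / 2)) ≤ rexp (-x) := by
        apply Real.exp_le_exp.mpr; nlinarith
      rw [norm_mul, norm_neg, Real.norm_eq_abs, Real.norm_eq_abs,
        abs_of_nonneg hx0, abs_of_nonneg (Real.exp_nonneg _)]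
      calc x * rexp (-(x ^ 2 / 2)) ≤ x * rexp (-x) := by
            exact mul_le_mul_of_nonneg_left this hx0
        _ = x ^ 1 * rexp (-x) := by ring
    · exact Real.tendsto_pow_mul_exp_neg_atTop_nhds_zero 1
  have key := MeasureTheory.integral_Ioi_of_hasDerivAt_of_tendsto' hderiv
    ((integrable_sq_exp_half.sub integrable_exp_half).integrableOn) htend
  rw [MeasureTheory.integral_sub integrable_sq_exp_half.integrableOn
    integrable_exp_half.integrableOn] at key
  have hInt : ∫ x in Set.Ioi (0:ℝ), rexp (-(x ^ 2 / 2)) = Real.sqrt (2 * π) / 2 := by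
    have := integral_gaussian_Ioi (1/2 : ℝ)
    rw [show π / (1/2 : ℝ) = 2 * π by ring] at this
    rw [← this]
    apply MeasureTheory.setIntegral_congr_fun measurableSet_Ioi
    intro x _; ring_nf
  simp only [neg_zero, zero_mul, sub_zero, zero_sub, neg_neg] at key
  norm_num at key
  linarith

noncomputable def qfun (t : ℝ) : ℝ := (max t 0) ^ 2 * rexp (-(t ^ 2 / 2))

lemma qfun_nonneg (t : ℝ) : 0 ≤ qfun t :=
  mul_nonneg (sq_nonneg _) (Real.exp_nonneg _)

lemma qfun_nonpos {t : ℝ} (ht : t ≤ 0) : qfun t = 0 := by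
  simp [qfun, max_eq_right ht]

lemma continuous_qfun : Continuous qfun := by
  unfold qfun; fun_prop

lemma qfun_le (t : ℝ) : qfun t ≤ t ^ 2 * rexp (-(t ^ 2 / 2)) := by
  unfold qfun
  apply mul_le_mul_of_nonneg_right _ (Real.exp_nonneg _)
  rw [← sq_abs t]
  exact pow_le_pow_left₀ (le_max_right _ _) (max_le (le_abs_self t) (abs_nonneg t)) 2

lemma integrable_qfun : Integrable qfun := by
  apply integrable_sq_exp_half.mono' continuous_qfun.aestronglyMeasurable
  refine Filter.Eventually.of_forall fun t => ?_
  rw [Real.norm_eq_abs, abs_of_nonneg (qfun_nonneg t)]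
  exact qfun_le t

lemma integral_qfun : ∫ t, qfun t = Real.sqrt (2 * π) / 2 := by
  rw [← MeasureTheory.setIntegral_eq_integral_of_forall_compl_eq_zero
    (s := Set.Ioi (0:ℝ)) (fun x hx => qfun_nonpos (by simpa using hx))]
  rw [← integral_Ioi_sq_exp_half]
  apply MeasureTheory.setIntegral_congr_fun measurableSet_Ioi
  intro x hx
  simp [qfun, max_eq_left (le_of_lt (Set.mem_Ioi.mp hx))]

lemma integrable_qfun_shift (τ : ℝ) : Integrable (fun x : ℝ => qfun (|x| - τ)) := by
  have h1 : Integrable (fun x : ℝ => qfun (x - τ)) := integrable_qfun.comp_sub_right τ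
  have h2 : Integrable (fun x : ℝ => qfun (-x - τ)) := by
    have := h1.comp_neg
    simpa using this
  rw [← MeasureTheory.integrableOn_univ, ← Set.Iic_union_Ioi (a := (0:ℝ)),
    MeasureTheory.integrableOn_union]
  constructor
  · apply h2.integrableOn.congr_fun _ measurableSet_Iic
    intro x hx
    simp only [abs_of_nonpos (Set.mem_Iic.mp hx)]
  · apply h1.integrableOn.congr_fun _ measurableSet_Ioi
    intro x hx
    simp only [abs_of_pos (Set.mem_Ioi.mp hx)]

lemma integral_qfun_shift {τ : ℝ} (hτ : 0 ≤ τ) :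
    ∫ x : ℝ, qfun (|x| - τ) = Real.sqrt (2 * π) := by
  rw [integral_comp_abs (f := fun t => qfun (t - τ))]
  rw [MeasureTheory.setIntegral_eq_integral_of_forall_compl_eq_zero
    (s := Set.Ioi (0:ℝ)) (fun x hx => qfun_nonpos (by simp at hx; linarith))]
  rw [MeasureTheory.integral_sub_right_eq_self (fun t => qfun t) τ, integral_qfun]
  ring

lemma sqrt_two_pi_pos : (0:ℝ) < Real.sqrt (2 * π) :=
  Real.sqrt_pos.mpr (by positivity)

lemma integrable_sub_sq_gauss (a : ℝ) :
    Integrable (fun t => (t - a) ^ 2) (gaussianReal 0 1) := by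
  rw [integrable_gaussianReal_iff]
  have : Integrable (fun x : ℝ => (Real.sqrt (2 * π))⁻¹ *
      ((x ^ 2 * rexp (-(x ^ 2 / 2)) - (2 * a) * (x * rexp (-(x ^ 2 / 2))))
        + a ^ 2 * rexp (-(x ^ 2 / 2)))) := by
    exact (((integrable_sq_exp_half.sub (integrable_mul_exp_half.const_mul (2*a))).add
      (integrable_exp_half.const_mul (a^2))).const_mul _)
  refine this.congr (Filter.Eventually.of_forall fun x => ?_)
  simp only [gaussianPDFReal_zero_one]
  ring

lemma integral_sub_sq_gauss (a : ℝ) :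
    ∫ t, (t - a) ^ 2 ∂(gaussianReal 0 1) = 1 + a ^ 2 := by
  rw [integral_gaussianReal_eq]
  have heq : ∀ x : ℝ, gaussianPDFReal 0 1 x * (x - a) ^ 2 =
      (Real.sqrt (2 * π))⁻¹ *
      ((x ^ 2 * rexp (-(x ^ 2 / 2)) - (2 * a) * (x * rexp (-(x ^ 2 / 2))))
        + a ^ 2 * rexp (-(x ^ 2 / 2))) := by
    intro x; rw [gaussianPDFReal_zero_one]; ring
  simp_rw [heq]
  have hA : Integrable (fun x : ℝ => x ^ 2 * rexp (-(x ^ 2 / 2))) := integrable_sq_exp_half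
  have hB : Integrable (fun x : ℝ => (2 * a) * (x * rexp (-(x ^ 2 / 2)))) :=
    integrable_mul_exp_half.const_mul (2*a)
  have hC : Integrable (fun x : ℝ => a ^ 2 * rexp (-(x ^ 2 / 2))) :=
    integrable_exp_half.const_mul (a^2)
  have hAB : Integrable (fun x : ℝ =>
      x ^ 2 * rexp (-(x ^ 2 / 2)) - (2 * a) * (x * rexp (-(x ^ 2 / 2)))) := hA.sub hB
  rw [MeasureTheory.integral_const_mul,
    MeasureTheory.integral_add hAB hC,
    MeasureTheory.integral_sub hA hB,
    MeasureTheory.integral_const_mul, MeasureTheory.integral_const_mul]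
  have h2 : ∫ x : ℝ, x ^ 2 * rexp (-(x ^ 2 / 2)) = Real.sqrt (2 * π) := by
    have habs := integral_comp_abs (f := fun t => t ^ 2 * rexp (-(t ^ 2 / 2)))
    simp only [sq_abs] at habs
    rw [habs, integral_Ioi_sq_exp_half]
    ring
  rw [h2, integral_mul_exp_half, integral_exp_half]
  field_simp
  ring

noncomputable def hfun (τ t : ℝ) : ℝ := (max (|t| - τ) 0) ^ 2

lemma hfun_nonneg (τ t : ℝ) : 0 ≤ hfun τ t := sq_nonneg _

lemma continuous_hfun (τ : ℝ) : Continuous (hfun τ) := by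
  unfold hfun; fun_prop

lemma continuous_gaussianPDFReal_zero_one : Continuous (gaussianPDFReal 0 1) := by
  have : (gaussianPDFReal 0 1) = fun x => (Real.sqrt (2 * π))⁻¹ * rexp (-(x ^ 2 / 2)) := by
    ext x; exact gaussianPDFReal_zero_one x
  rw [this]; fun_prop

lemma hfun_le {τ : ℝ} (hτ : 0 ≤ τ) (t : ℝ) : hfun τ t ≤ t ^ 2 := by
  unfold hfun
  rw [← sq_abs t]
  apply pow_le_pow_left₀ (le_max_right _ _) (max_le (by linarith [abs_nonneg t]) (abs_nonneg t)) 2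

lemma integrable_hfun {τ : ℝ} (hτ : 0 ≤ τ) : Integrable (hfun τ) (gaussianReal 0 1) := by
  rw [integrable_gaussianReal_iff]
  apply (integrable_sq_exp_half.const_mul ((Real.sqrt (2 * π))⁻¹)).mono'
    (((continuous_gaussianPDFReal_zero_one).mul (continuous_hfun τ)).aestronglyMeasurable)
  refine Filter.Eventually.of_forall fun x => ?_
  rw [Real.norm_eq_abs, Pi.mul_apply, abs_of_nonneg
    (mul_nonneg (gaussianPDFReal_nonneg 0 1 x) (hfun_nonneg τ x)), gaussianPDFReal_zero_one]
  have h1 : hfun τ x ≤ x ^ 2 := hfun_le hτ x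
  have h2 : (0:ℝ) < (Real.sqrt (2 * π))⁻¹ := by positivity
  calc (Real.sqrt (2 * π))⁻¹ * rexp (-(x ^ 2 / 2)) * hfun τ x
      ≤ (Real.sqrt (2 * π))⁻¹ * rexp (-(x ^ 2 / 2)) * x ^ 2 := by
        apply mul_le_mul_of_nonneg_left h1 (by positivity)
    _ = (Real.sqrt (2 * π))⁻¹ * (x ^ 2 * rexp (-(x ^ 2 / 2))) := by ring

lemma gauss_off_bound {τ : ℝ} (hτ : 0 ≤ τ) :
    ∫ t, hfun τ t ∂(gaussianReal 0 1) ≤ rexp (-(τ ^ 2 / 2)) := by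
  rw [integral_gaussianReal_eq]
  set c := (Real.sqrt (2 * π))⁻¹ with hc
  have hc0 : (0:ℝ) < c := by rw [hc]; positivity
  have hpt : ∀ x : ℝ, gaussianPDFReal 0 1 x * hfun τ x ≤
      c * rexp (-(τ ^ 2 / 2)) * qfun (|x| - τ) := by
    intro x
    rw [gaussianPDFReal_zero_one]
    unfold hfun qfun
    rcases le_or_gt (|x|) τ with h | h
    · rw [max_eq_right (by linarith)]
      norm_num
    · rw [max_eq_left (by linarith)]
      have hexp : rexp (-(x ^ 2 / 2)) ≤ rexp (-(τ ^ 2 / 2)) * rexp (-((|x| - τ) ^ 2 / 2)) := by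
        rw [← Real.exp_add]
        apply Real.exp_le_exp.mpr
        nlinarith [sq_abs x, mul_nonneg hτ (sub_nonneg.mpr h.le)]
      calc c * rexp (-(x ^ 2 / 2)) * (|x| - τ) ^ 2
          ≤ c * (rexp (-(τ ^ 2 / 2)) * rexp (-((|x| - τ) ^ 2 / 2))) * (|x| - τ) ^ 2 := by
            apply mul_le_mul_of_nonneg_right _ (sq_nonneg _)
            exact mul_le_mul_of_nonneg_left hexp hc0.le
        _ = c * rexp (-(τ ^ 2 / 2)) * ((|x| - τ) ^ 2 * rexp (-((|x| - τ) ^ 2 / 2))) := by ring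
  calc ∫ x, gaussianPDFReal 0 1 x * hfun τ x
      ≤ ∫ x, c * rexp (-(τ ^ 2 / 2)) * qfun (|x| - τ) := by
        apply MeasureTheory.integral_mono_of_nonneg
          (Filter.Eventually.of_forall fun x =>
            mul_nonneg (gaussianPDFReal_nonneg 0 1 x) (hfun_nonneg τ x))
          ((integrable_qfun_shift τ).const_mul _)
          (Filter.Eventually.of_forall hpt)
    _ = c * rexp (-(τ ^ 2 / 2)) * Real.sqrt (2 * π) := by
        rw [MeasureTheory.integral_const_mul, integral_qfun_shift hτ]
    _ = rexp (-(τ ^ 2 / 2)) := by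
        rw [hc]
        field_simp


instance stdGaussian_prob (p : ℕ) : IsProbabilityMeasure (stdGaussian p) := by
  unfold _root_.stdGaussian; infer_instance

lemma map_eval_stdGaussian {p : ℕ} (j : Fin p) :
    (stdGaussian p).map (Function.eval j) = gaussianReal 0 1 := by
  apply Measure.ext fun s hs => ?_
  rw [Measure.map_apply (measurable_pi_apply j) hs]
  have hpre : Function.eval j ⁻¹' s =
      Set.pi Set.univ (Function.update (fun _ : Fin p => (Set.univ : Set ℝ)) j s) := by
    ext x
    simp only [Set.mem_preimage, Set.mem_pi, Set.mem_univ, forall_true_left, Function.eval]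
    constructor
    · intro hx i
      rcases eq_or_ne i j with rfl | hij
      · simpa using hx
      · simp [Function.update_of_ne hij]
    · intro hx
      simpa using hx j
  rw [hpre, _root_.stdGaussian, Measure.pi_pi]
  rw [Finset.prod_eq_single j (fun i _ hij => by simp [Function.update_of_ne hij]) (by simp)]
  simp

lemma integral_eval_stdGaussian {p : ℕ} (j : Fin p) {c : ℝ → ℝ}
    (hc : AEStronglyMeasurable c (gaussianReal 0 1)) :
    ∫ g, c (g j) ∂(stdGaussian p) = ∫ t, c t ∂(gaussianReal 0 1) := by
  have := (MeasureTheory.integral_map (φ := Function.eval j) (μ := stdGaussian p)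
    (measurable_pi_apply j).aemeasurable
    (by rw [map_eval_stdGaussian]; exact hc)).symm
  rw [show (fun g : Fin p → ℝ => c (g j)) = fun g : Fin p → ℝ => c (Function.eval j g) from rfl]
  rw [this, map_eval_stdGaussian]

lemma integrable_eval_stdGaussian {p : ℕ} (j : Fin p) {c : ℝ → ℝ}
    (hc : Integrable c (gaussianReal 0 1)) :
    Integrable (fun g => c (g j)) (stdGaussian p) := by
  have h := (MeasureTheory.integrable_map_measure
    (by rw [map_eval_stdGaussian]; exact hc.aestronglyMeasurable)
    (measurable_pi_apply j).aemeasurable).mp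
    (by rw [map_eval_stdGaussian]; exact hc)
  exact h

lemma self_mul_sign' (x : ℝ) : x * Real.sign x = |x| := by
  rcases lt_trichotomy x 0 with h | h | h
  · rw [Real.sign_of_neg h, abs_of_neg h]; ring
  · simp [h]
  · rw [Real.sign_of_pos h, abs_of_pos h]; ring

lemma sign_sq_eq_one {x : ℝ} (hx : x ≠ 0) : (Real.sign x) ^ 2 = 1 := by
  rcases lt_trichotomy x 0 with h | h | h
  · rw [Real.sign_of_neg h]; norm_num
  · exact absurd h hx
  · rw [Real.sign_of_pos h]; norm_num

lemma abs_sign_le (x : ℝ) : |Real.sign x| ≤ 1 := by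
  rcases lt_trichotomy x 0 with h | h | h
  · rw [Real.sign_of_neg h]; norm_num
  · simp [h]
  · rw [Real.sign_of_pos h]; norm_num

lemma clamp_sq {τ : ℝ} (hτ : 0 ≤ τ) (t : ℝ) :
    (t - max (-τ) (min τ t)) ^ 2 = hfun τ t := by
  unfold hfun
  rcases le_total t (-τ) with h | h
  · rw [max_eq_left (le_trans (min_le_right τ t) h), abs_of_nonpos (by linarith),
      max_eq_left (by linarith)]
    ring
  · rcases le_total τ t with h2 | h2
    · rw [min_eq_left h2, max_eq_right (by linarith), abs_of_nonneg (by linarith),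
        max_eq_left (by linarith)]
    · rw [min_eq_right h2, max_eq_right h,
        max_eq_right (by have : |t| ≤ τ := abs_le.mpr ⟨by linarith, h2⟩; linarith)]
      ring

noncomputable def cfun {p : ℕ} (v : Fin p → ℝ) (τ : ℝ) (j : Fin p) : ℝ → ℝ :=
  if v j ≠ 0 then (fun t => (t - τ * Real.sign (v j)) ^ 2) else hfun τ

lemma cfun_nonneg {p : ℕ} (v : Fin p → ℝ) (τ : ℝ) (j : Fin p) (t : ℝ) :
    0 ≤ cfun v τ j t := by
  unfold cfun
  by_cases hvj : v j ≠ 0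
  · rw [if_pos hvj]; positivity
  · rw [if_neg hvj]; exact hfun_nonneg τ t

lemma dot_le_sqrt_G {p : ℕ} (v : Fin p → ℝ) {τ : ℝ} (hτ : 0 ≤ τ) (g x : Fin p → ℝ)
    (hx : x ∈ coneHull {w | ∃ y : Fin p → ℝ, l1 y ≤ l1 v ∧ w = y - v} ∩ {x | l2 x ≤ 1}) :
    dot x g ≤ Real.sqrt (∑ j, cfun v τ j (g j)) := by
  obtain ⟨⟨k, t, z, ht, hz, hxeq⟩, hx2⟩ := hx
  set u : Fin p → ℝ :=
    fun j => if v j ≠ 0 then τ * Real.sign (v j) else max (-τ) (min τ (g j)) with hu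
  have hu_abs : ∀ j, |u j| ≤ τ := by
    intro j
    simp only [hu]
    by_cases hvj : v j ≠ 0
    · rw [if_pos hvj, abs_mul, abs_of_nonneg hτ]
      calc τ * |Real.sign (v j)| ≤ τ * 1 := mul_le_mul_of_nonneg_left (abs_sign_le _) hτ
        _ = τ := mul_one τ
    · rw [if_neg hvj, abs_le]
      constructor
      · exact le_max_left _ _
      · exact max_le (by linarith) (min_le_left _ _)
  have hvu : dot v u = τ * l1 v := by
    unfold dot l1
    rw [Finset.mul_sum]
    apply Finset.sum_congr rfl
    intro j _
    simp only [hu]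
    by_cases hvj : v j ≠ 0
    · rw [if_pos hvj,
        show v j * (τ * Real.sign (v j)) = τ * (v j * Real.sign (v j)) by ring,
        self_mul_sign']
    · push_neg at hvj
      simp [hvj]
  have hyu : ∀ y : Fin p → ℝ, dot y u ≤ τ * l1 y := by
    intro y
    unfold dot l1
    rw [Finset.mul_sum]
    apply Finset.sum_le_sum
    intro j _
    calc y j * u j ≤ |y j * u j| := le_abs_self _
      _ = |y j| * |u j| := abs_mul _ _
      _ ≤ |y j| * τ := mul_le_mul_of_nonneg_left (hu_abs j) (abs_nonneg _)
      _ = τ * |y j| := mul_comm _ _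
  have hzu : ∀ i : Fin k, dot (z i) u ≤ 0 := by
    intro i
    obtain ⟨y, hy, hzi⟩ := hz i
    have hsub : dot (z i) u = dot y u - dot v u := by
      rw [hzi]
      unfold dot
      rw [← Finset.sum_sub_distrib]
      apply Finset.sum_congr rfl
      intro j _
      simp [sub_mul]
    rw [hsub, hvu]
    have := hyu y
    have h2 : τ * l1 y ≤ τ * l1 v := mul_le_mul_of_nonneg_left hy hτ
    linarith
  have hxu : dot x u ≤ 0 := by
    have hdot : dot x u = ∑ i, t i * dot (z i) u := by
      rw [hxeq]
      unfold dot
      simp_rw [Finset.sum_apply, Pi.smul_apply, smul_eq_mul, Finset.sum_mul, Finset.mul_sum]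
      rw [Finset.sum_comm]
      apply Finset.sum_congr rfl
      intro i _
      apply Finset.sum_congr rfl
      intro j _
      ring
    rw [hdot]
    apply Finset.sum_nonpos
    intro i _
    exact mul_nonpos_iff.mpr (Or.inl ⟨ht i, hzu i⟩)
  have hsplit : dot x g = dot x (fun j => g j - u j) + dot x u := by
    unfold dot
    rw [← Finset.sum_add_distrib]
    apply Finset.sum_congr rfl
    intro j _
    ring
  have hGsq : ∑ j, (g j - u j) ^ 2 = ∑ j, cfun v τ j (g j) := by
    apply Finset.sum_congr rfl
    intro j _
    simp only [hu]
    unfold cfun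
    by_cases hvj : v j ≠ 0
    · rw [if_pos hvj, if_pos hvj]
    · rw [if_neg hvj, if_neg hvj]
      exact clamp_sq hτ (g j)
  have hcs : dot x (fun j => g j - u j) ≤ Real.sqrt (∑ j, cfun v τ j (g j)) := by
    unfold dot
    calc ∑ j, x j * (g j - u j)
        ≤ Real.sqrt (∑ j, (x j) ^ 2) * Real.sqrt (∑ j, (g j - u j) ^ 2) :=
          Real.sum_mul_le_sqrt_mul_sqrt _ _ _
      _ ≤ 1 * Real.sqrt (∑ j, (g j - u j) ^ 2) := by
          apply mul_le_mul_of_nonneg_right _ (Real.sqrt_nonneg _)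
          exact hx2
      _ = Real.sqrt (∑ j, cfun v τ j (g j)) := by rw [one_mul, hGsq]
  linarith


theorem gauss_width_of_descent_cone {p s : ℕ} (hs : 1 ≤ s) (hsp : s ≤ p)
    (v : Fin p → ℝ) (hsparse : (Finset.univ.filter (fun i => v i ≠ 0)).card ≤ s) :
    (gaussWidth (coneHull {w | ∃ y : Fin p → ℝ, l1 y ≤ l1 v ∧ w = y - v} ∩
        {x | l2 x ≤ 1})) ^ 2 ≤
      2 * s * Real.log (Real.exp 1 * p / s) := by
  classical
  have hs0 : (0:ℝ) < s := by exact_mod_cast hs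
  have hp0 : (0:ℝ) < p := by exact_mod_cast lt_of_lt_of_le (by exact_mod_cast hs) (by exact_mod_cast hsp)
  have hps1 : (1:ℝ) ≤ (p:ℝ)/s := by
    rw [le_div_iff₀ hs0]; simp only [one_mul]; exact_mod_cast hsp
  have hlog0 : 0 ≤ Real.log ((p:ℝ)/s) := Real.log_nonneg hps1
  set τ := Real.sqrt (2 * Real.log ((p:ℝ)/s)) with hτdef
  have hτ0 : 0 ≤ τ := Real.sqrt_nonneg _
  have hτsq : τ ^ 2 = 2 * Real.log ((p:ℝ)/s) := Real.sq_sqrt (by linarith)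
  set T := coneHull {w | ∃ y : Fin p → ℝ, l1 y ≤ l1 v ∧ w = y - v} ∩
      {x : Fin p → ℝ | l2 x ≤ 1} with hT
  set f : (Fin p → ℝ) → ℝ := fun g => ⨆ x ∈ T, dot x g with hf
  set Gf : (Fin p → ℝ) → ℝ := fun g => ∑ j, cfun v τ j (g j) with hGf
  have hGf0 : ∀ g, 0 ≤ Gf g := fun g => Finset.sum_nonneg fun j _ => cfun_nonneg v τ j (g j)
  -- integrability of each coordinate function
  have hcint : ∀ j, Integrable (cfun v τ j) (gaussianReal 0 1) := by
    intro j
    unfold cfun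
    by_cases hvj : v j ≠ 0
    · rw [if_pos hvj]; exact integrable_sub_sq_gauss _
    · rw [if_neg hvj]; exact integrable_hfun hτ0
  have hGint : Integrable Gf (stdGaussian p) := by
    apply MeasureTheory.integrable_finset_sum
    intro j _
    exact integrable_eval_stdGaussian j (hcint j)
  -- value bound for the integral of Gf
  have hGval : ∫ g, Gf g ∂(stdGaussian p) ≤ 2 * s * Real.log (Real.exp 1 * p / s) := by
    rw [hGf, MeasureTheory.integral_finset_sum _
      (fun j _ => integrable_eval_stdGaussian j (hcint j))]
    have hval : ∀ j, ∫ g, cfun v τ j (g j) ∂(stdGaussian p) ≤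
        if v j ≠ 0 then 1 + τ ^ 2 else (s:ℝ)/p := by
      intro j
      rw [integral_eval_stdGaussian j (hcint j).aestronglyMeasurable]
      by_cases hvj : v j ≠ 0
      · rw [if_pos hvj]
        have : cfun v τ j = fun t => (t - τ * Real.sign (v j)) ^ 2 := by
          unfold cfun; rw [if_pos hvj]
        rw [this, integral_sub_sq_gauss, mul_pow, sign_sq_eq_one hvj, mul_one]
      · rw [if_neg hvj]
        have hcf : cfun v τ j = hfun τ := by unfold cfun; rw [if_neg hvj]
        rw [hcf]
        calc ∫ t, hfun τ t ∂(gaussianReal 0 1) ≤ rexp (-(τ ^ 2 / 2)) := gauss_off_bound hτ0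
          _ = (s:ℝ)/p := by
            rw [hτsq]
            rw [show -(2 * Real.log ((p:ℝ)/s) / 2) = -Real.log ((p:ℝ)/s) by ring,
              Real.exp_neg, Real.exp_log (by positivity), inv_div]
    calc ∑ j, ∫ g, cfun v τ j (g j) ∂(stdGaussian p)
        ≤ ∑ j, (if v j ≠ 0 then 1 + τ ^ 2 else (s:ℝ)/p) :=
          Finset.sum_le_sum fun j _ => hval j
      _ ≤ (s:ℝ) * (1 + τ ^ 2) + p * ((s:ℝ)/p) := by
          rw [Finset.sum_ite, Finset.sum_const, Finset.sum_const, nsmul_eq_mul, nsmul_eq_mul]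
          have hc1 : ((Finset.univ.filter (fun j => v j ≠ 0)).card : ℝ) ≤ s := by
            exact_mod_cast hsparse
          have hc2 : ((Finset.univ.filter (fun j : Fin p => ¬ v j ≠ 0)).card : ℝ) ≤ p := by
            exact_mod_cast (Finset.card_filter_le _ _).trans (le_of_eq (Finset.card_fin p))
          exact add_le_add (mul_le_mul_of_nonneg_right hc1 (by positivity))
            (mul_le_mul_of_nonneg_right hc2 (by positivity))
      _ = 2 * s * Real.log (Real.exp 1 * p / s) := by
          have hlogeq : Real.log (Real.exp 1 * p / s) = 1 + Real.log ((p:ℝ)/s) := by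
            rw [mul_div_assoc, Real.log_mul (Real.exp_ne_zero 1) (by positivity), Real.log_exp]
          rw [hlogeq, hτsq]
          field_simp
          ring
  have hRHS0 : 0 ≤ 2 * s * Real.log (Real.exp 1 * p / s) := by
    apply mul_nonneg (by positivity)
    apply Real.log_nonneg
    rw [mul_div_assoc]
    calc (1:ℝ) = 1 * 1 := by ring
      _ ≤ Real.exp 1 * ((p:ℝ)/s) := by
          apply mul_le_mul _ hps1 zero_le_one (Real.exp_nonneg 1)
          linarith [Real.one_le_exp (le_refl (0:ℝ)), Real.add_one_le_exp (1:ℝ)]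
  -- pointwise bound on the sup
  have hsup_le : ∀ g x, (⨆ _ : x ∈ T, dot x g) ≤ Real.sqrt (Gf g) := by
    intro g x
    by_cases hxT : x ∈ T
    · rw [ciSup_pos hxT]
      exact dot_le_sqrt_G v hτ0 g x hxT
    · haveI : IsEmpty (x ∈ T) := ⟨hxT⟩
      rw [Real.iSup_of_isEmpty]
      exact Real.sqrt_nonneg _
  have hfG : ∀ g, f g ≤ Real.sqrt (Gf g) := by
    intro g
    exact Real.iSup_le (fun x => hsup_le g x) (Real.sqrt_nonneg _)
  have h0T : (0 : Fin p → ℝ) ∈ T := by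
    constructor
    · exact ⟨0, (fun i => i.elim0), (fun i => i.elim0), (fun i => i.elim0),
        (fun i => i.elim0), by simp⟩
    · show l2 (0 : Fin p → ℝ) ≤ 1
      simp [l2]
  have hf0 : ∀ g, 0 ≤ f g := by
    intro g
    have hbdd : BddAbove (Set.range fun x => ⨆ _ : x ∈ T, dot x g) := by
      refine ⟨Real.sqrt (Gf g), ?_⟩
      rintro _ ⟨x, rfl⟩
      exact hsup_le g x
    have h1 := le_ciSup hbdd (0 : Fin p → ℝ)
    rw [ciSup_pos h0T] at h1
    have hdot0 : dot (0 : Fin p → ℝ) g = 0 := by unfold dot; simp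
    rw [hdot0] at h1
    exact h1
  have hfsq : ∀ g, f g ^ 2 ≤ Gf g := by
    intro g
    calc f g ^ 2 ≤ Real.sqrt (Gf g) ^ 2 := pow_le_pow_left₀ (hf0 g) (hfG g) 2
      _ = Gf g := Real.sq_sqrt (hGf0 g)
  have hgw : gaussWidth T = ∫ g, f g ∂(stdGaussian p) := rfl
  by_cases hint : Integrable f (stdGaussian p)
  · have hsqint : Integrable (fun g => f g ^ 2) (stdGaussian p) := by
      apply hGint.mono'
      · have : (fun g => f g ^ 2) = fun g => f g * f g := by ext g; ring
        rw [this]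
        exact hint.aestronglyMeasurable.mul hint.aestronglyMeasurable
      · refine Filter.Eventually.of_forall fun g => ?_
        rw [Real.norm_eq_abs, abs_of_nonneg (sq_nonneg _)]
        exact hfsq g
    have hmem : MemLp f 2 (stdGaussian p) :=
      (memLp_two_iff_integrable_sq hint.aestronglyMeasurable).mpr hsqint
    have hvar := variance_eq_sub hmem
    have hvn := variance_nonneg f (stdGaussian p)
    have hkey : (∫ g, f g ∂(stdGaussian p)) ^ 2 ≤ ∫ g, f g ^ 2 ∂(stdGaussian p) := by
      rw [hvar] at hvn
      have hpow : (stdGaussian p)[f ^ 2] = ∫ g, f g ^ 2 ∂(stdGaussian p) := by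
        congr 1
      have hpow2 : (stdGaussian p)[f] = ∫ g, f g ∂(stdGaussian p) := rfl
      rw [hpow, hpow2] at hvn
      linarith
    have h2 : ∫ g, f g ^ 2 ∂(stdGaussian p) ≤ ∫ g, Gf g ∂(stdGaussian p) :=
      MeasureTheory.integral_mono_of_nonneg
        (Filter.Eventually.of_forall fun g => sq_nonneg _) hGint
        (Filter.Eventually.of_forall fun g => hfsq g)
    rw [hgw]
    calc (∫ g, f g ∂(stdGaussian p)) ^ 2 ≤ ∫ g, f g ^ 2 ∂(stdGaussian p) := hkey
      _ ≤ ∫ g, Gf g ∂(stdGaussian p) := h2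
      _ ≤ 2 * s * Real.log (Real.exp 1 * p / s) := hGval
  · rw [hgw, MeasureTheory.integral_undef hint]
    simpa using hRHS0
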